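/- arXiv:2601.07452 — 5 statements merged into one kernel-verified Lean document; each statement's English description precedes it below -/
import Mathlib

section
/- Let P = {k ∈ {1,…,K} : price v_k is optimal for x*}. Then x* lies in the relative interior of the convex hull of the finite set {x^S : P ⊆ S ⊆ {1,…,K}}. -/
open Finset

/-- A market: a probability vector over the `K` valuations. -/
def IsMarket (K : ℕ) (x : Fin K → ℝ) : Prop :=
  (∀ j, 0 ≤ x j) ∧ ∑ j, x j = 1

/-- Revenue from charging price `v k` in market `x`. -/
def rev {K : ℕ} (v x : Fin K → ℝ) (k : Fin K) : ℝ :=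
  v k * ∑ j ∈ Finset.Ici k, x j

/-- Price `v k` is optimal for market `x`. -/
def OptPrice {K : ℕ} (v x : Fin K → ℝ) (k : Fin K) : Prop :=
  ∀ i, rev v x i ≤ rev v x k

/-- A segmentation of the aggregate market `xstar`: a finitely supported probability
distribution on markets averaging to `xstar`. -/
def IsSegmentation {K : ℕ} (xstar : Fin K → ℝ) (σ : (Fin K → ℝ) →₀ ℝ) : Prop :=
  (∀ x, 0 ≤ σ x) ∧ (∑ x ∈ σ.support, σ x = 1) ∧
  (∀ x ∈ σ.support, IsMarket K x) ∧
  (∑ x ∈ σ.support, σ x • x = xstar)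

/-- A pricing rule assigns a probability vector over prices to each market in the support. -/
def IsPricingRule {K : ℕ} (σ : (Fin K → ℝ) →₀ ℝ) (φ : (Fin K → ℝ) → Fin K → ℝ) : Prop :=
  ∀ x ∈ σ.support, (∀ k, 0 ≤ φ x k) ∧ ∑ k, φ x k = 1

/-- A pricing rule is optimal if it only charges optimal prices. -/
def IsOptimalPricing {K : ℕ} (v : Fin K → ℝ) (σ : (Fin K → ℝ) →₀ ℝ)
    (φ : (Fin K → ℝ) → Fin K → ℝ) : Prop :=
  ∀ x ∈ σ.support, ∀ k, 0 < φ x k → OptPrice v x k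

/-- Consumer surplus of a segmentation and pricing rule. -/
def consumerSurplus {K : ℕ} (v : Fin K → ℝ) (σ : (Fin K → ℝ) →₀ ℝ)
    (φ : (Fin K → ℝ) → Fin K → ℝ) : ℝ :=
  ∑ x ∈ σ.support, σ x * ∑ k, φ x k * ∑ j ∈ Finset.Ici k, (v j - v k) * x j

/-- Producer surplus of a segmentation and pricing rule. -/
def producerSurplus {K : ℕ} (v : Fin K → ℝ) (σ : (Fin K → ℝ) →₀ ℝ)
    (φ : (Fin K → ℝ) → Fin K → ℝ) : ℝ :=
  ∑ x ∈ σ.support, σ x * ∑ k, φ x k * (v k * ∑ j ∈ Finset.Ici k, x j)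

/-- A direct segmentation: markets `xs k` for `k ∈ A`, pairwise distinct, with
`xs k ∈ X_k`, weights `w k > 0` summing to one and averaging to `xstar`. -/
def IsDirectSeg {K : ℕ} (v xstar : Fin K → ℝ) (A : Finset (Fin K))
    (xs : Fin K → Fin K → ℝ) (w : Fin K → ℝ) : Prop :=
  Set.InjOn xs (A : Set (Fin K)) ∧
  (∀ k ∈ A, IsMarket K (xs k)) ∧
  (∀ k ∈ A, OptPrice v (xs k) k) ∧
  (∀ k ∈ A, 0 < w k) ∧
  (∑ k ∈ A, w k = 1) ∧
  (∑ k ∈ A, w k • xs k = xstar)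

/-- Consumer surplus of a direct segmentation (with its direct pricing rule). -/
def directCS {K : ℕ} (v : Fin K → ℝ) (A : Finset (Fin K))
    (xs : Fin K → Fin K → ℝ) (w : Fin K → ℝ) : ℝ :=
  ∑ k ∈ A, w k * ∑ j ∈ Finset.Ici k, (v j - v k) * xs k j

/-- Producer surplus of a direct segmentation (with its direct pricing rule). -/
def directPS {K : ℕ} (v : Fin K → ℝ) (A : Finset (Fin K))
    (xs : Fin K → Fin K → ℝ) (w : Fin K → ℝ) : ℝ :=
  ∑ k ∈ A, w k * (v k * ∑ j ∈ Finset.Ici k, xs k j)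

/-- `x` is the characteristic market `x^S`: supported in `S`, and every price in `S`
yields the same revenue. -/
def IsCharMarket {K : ℕ} (v : Fin K → ℝ) (S : Finset (Fin K)) (x : Fin K → ℝ) : Prop :=
  IsMarket K x ∧ (∀ j ∉ S, x j = 0) ∧ ∀ i ∈ S, ∀ i' ∈ S, rev v x i = rev v x i'

/-- The joint distribution over valuations and prices induced by `(σ, φ)`:
mass of the pair `(v j, v k)`. -/
def jointDist {K : ℕ} (σ : (Fin K → ℝ) →₀ ℝ) (φ : (Fin K → ℝ) → Fin K → ℝ)
    (j k : Fin K) : ℝ :=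
  ∑ x ∈ σ.support, σ x * φ x k * x j

/-- The joint distribution over valuations and prices induced by a direct segmentation
with its direct pricing rule. -/
def directJoint {K : ℕ} (A : Finset (Fin K)) (xs : Fin K → Fin K → ℝ) (w : Fin K → ℝ)
    (j k : Fin K) : ℝ :=
  if k ∈ A then w k * xs k j else 0

/-- The total mass `m_k` of price `v k` under `(σ, φ)`. -/
noncomputable def mass {K : ℕ} (σ : (Fin K → ℝ) →₀ ℝ) (φ : (Fin K → ℝ) → Fin K → ℝ)
    (k : Fin K) : ℝ :=
  ∑ x ∈ σ.support, σ x * φ x k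

/-- The conditional market `x^k` given price `v k` under `(σ, φ)`. -/
noncomputable def condMarket {K : ℕ} (σ : (Fin K → ℝ) →₀ ℝ) (φ : (Fin K → ℝ) → Fin K → ℝ)
    (k : Fin K) : Fin K → ℝ :=
  (mass σ φ k)⁻¹ • ∑ x ∈ σ.support, (σ x * φ x k) • x


lemma posCombo_mem_intrinsicInterior {E : Type*} [NormedAddCommGroup E] [NormedSpace ℝ E]
    (t : Finset E) (w : E → ℝ) (hw : ∀ f ∈ t, 0 < w f) (hw1 : ∑ f ∈ t, w f = 1)
    (p : E) (hp : ∑ f ∈ t, w f • f = p) :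
    p ∈ intrinsicInterior ℝ (convexHull ℝ (t : Set E)) := by
  classical
  have hpm : p ∈ convexHull ℝ (t : Set E) := by
    have h2 := Finset.centerMass_mem_convexHull t (w := w) (fun f hf => (hw f hf).le)
      (by rw [hw1]; norm_num) (z := fun f => f) (fun f hf => Finset.mem_coe.2 hf)
    rwa [Finset.centerMass_eq_of_sum_1 _ _ hw1, hp] at h2
  have hpA : p ∈ affineSpan ℝ (convexHull ℝ (t : Set E)) := subset_affineSpan ℝ _ hpm
  -- the linear map sending coefficients to combinations of (f - p)
  set vv : ↥t → E := fun f => (f : E) - p with hvv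
  set L : (↥t → ℝ) →ₗ[ℝ] E := Fintype.linearCombination ℝ vv with hL
  have hLapp : ∀ c : ↥t → ℝ, L c = ∑ f : ↥t, c f • vv f := by
    intro c; simp [hL, Fintype.linearCombination_apply]
  set D := LinearMap.range L with hD
  have hmemD : ∀ q ∈ affineSpan ℝ (convexHull ℝ (t : Set E)), q - p ∈ D := by
    intro q hq
    have h1 : q -ᵥ p ∈ (affineSpan ℝ (convexHull ℝ (t : Set E))).direction :=
      AffineSubspace.vsub_mem_direction hq hpA
    rw [affineSpan_convexHull, direction_affineSpan, vectorSpan_def] at h1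
    have hsub : (t : Set E) -ᵥ (t : Set E) ⊆ (D : Set E) := by
      rintro x ⟨a, ha, b, hb, rfl⟩
      have ha' : a ∈ t := ha
      have hb' : b ∈ t := hb
      have h1 : a - p ∈ D := ⟨Pi.single ⟨a, ha'⟩ 1, by
        rw [hLapp]; rw [Finset.sum_eq_single (⟨a, ha'⟩ : ↥t)]
        · simp [vv]
        · intro b hbb hne; simp [Pi.single_apply, hne.symm] -- careful
        · simp⟩
      have h2 : b - p ∈ D := ⟨Pi.single ⟨b, hb'⟩ 1, by
        rw [hLapp]; rw [Finset.sum_eq_single (⟨b, hb'⟩ : ↥t)]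
        · simp [vv]
        · intro c hcc hne; simp [Pi.single_apply, hne.symm]
        · simp⟩
      have := sub_mem h1 h2
      simpa [vsub_eq_sub] using this
    exact (Submodule.span_le.2 hsub) h1
  -- right inverse
  obtain ⟨g, hg⟩ := LinearMap.exists_rightInverse_of_surjective L.rangeRestrict
    (LinearMap.range_rangeRestrict L)
  have hLg : ∀ d : D, L (g d) = (d : E) := by
    intro d
    have := congrArg (fun m => (m d : E)) hg
    simpa [LinearMap.rangeRestrict] using this
  haveI : FiniteDimensional ℝ D := by
    infer_instance
  have hgc : Continuous g := g.continuous_of_finiteDimensional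
  -- the open set of good perturbations
  set u : D → ↥t → ℝ := fun d f => w f + g d f - (∑ f' : ↥t, g d f') * w f with hu
  have hucont : ∀ f : ↥t, Continuous fun d => u d f := by
    intro f
    apply Continuous.sub
    · exact continuous_const.add ((continuous_apply f).comp hgc)
    · exact (Continuous.mul (continuous_finset_sum _ fun f' _ => (continuous_apply f').comp hgc)
        continuous_const)
  set U : Set D := {d | ∀ f : ↥t, 0 < u d f} with hU
  have hUopen : IsOpen U := by
    have : U = ⋂ f : ↥t, {d | 0 < u d f} := by ext d; simp [hU]
    rw [this]
    exact isOpen_iInter_of_finite fun f => isOpen_lt continuous_const (hucont f)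
  have hU0 : (0 : D) ∈ U := by
    intro f
    have : u 0 f = w f := by simp [hu]
    rw [this]
    exact hw f f.2
  -- the map from the affine span to D
  set A := affineSpan ℝ (convexHull ℝ (t : Set E)) with hA
  set ρ : A → D := fun q => ⟨(q : E) - p, hmemD q q.2⟩ with hρ
  have hρc : Continuous ρ :=
    Continuous.subtype_mk (continuous_subtype_val.sub continuous_const) _
  -- membership in interior
  rw [mem_intrinsicInterior]
  refine ⟨⟨p, hpA⟩, ?_, rfl⟩
  rw [mem_interior]
  refine ⟨ρ ⁻¹' U, ?_, hUopen.preimage hρc, ?_⟩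
  · intro q hqU
    simp only [Set.mem_preimage] at hqU
    set d : D := ρ q with hd
    have hkey : (q : E) ∈ convexHull ℝ (t : Set E) := by
      have hsum1 : ∑ f : ↥t, u d f = 1 := by
        have h1 : ∑ f : ↥t, w (f : E) = 1 := by rw [Finset.sum_coe_sort t w]; exact hw1
        simp only [hu, Finset.sum_sub_distrib, Finset.sum_add_distrib, h1, ← Finset.mul_sum]
        ring
      have hcomb : ∑ f : ↥t, u d f • (f : E) = (q : E) := by
        have hLgd : ∑ f : ↥t, g d f • vv f = (q : E) - p := by
          rw [← hLapp]; rw [hLg]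
        have hpp : ∑ f : ↥t, w (f : E) • (f : E) = p := by
          rw [Finset.sum_coe_sort t (fun f => w f • f)]; exact hp
        calc ∑ f : ↥t, u d f • (f : E)
            = ∑ f : ↥t, (w (f:E) • (f:E) + g d f • (f:E) - ((∑ f' : ↥t, g d f') * w (f:E)) • (f:E)) := by
              apply Finset.sum_congr rfl; intro f _; rw [hu]; module
          _ = p + ∑ f : ↥t, g d f • (f:E) - (∑ f' : ↥t, g d f') • p := by
              rw [Finset.sum_sub_distrib, Finset.sum_add_distrib, hpp]
              congr 1
              simp only [mul_smul]
              rw [← Finset.smul_sum, hpp]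
          _ = p + ∑ f : ↥t, g d f • ((f:E) - p) := by
              simp only [smul_sub, Finset.sum_sub_distrib, ← Finset.sum_smul]
              abel
          _ = (q : E) := by rw [← hvv] at *; rw [hLgd]; abel
      rw [← hcomb, ← Finset.centerMass_eq_of_sum_1 _ _ hsum1]
      exact Finset.centerMass_mem_convexHull _ (fun f _ => (hqU f).le) (by rw [hsum1]; norm_num)
        (fun f _ => f.2)
    exact hkey
  · show ρ ⟨p, hpA⟩ ∈ U
    have : ρ ⟨p, hpA⟩ = 0 := by
      apply Subtype.ext; simp [hρ]
    rw [this]; exact hU0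

section Aux
variable {K : ℕ} {v : Fin K → ℝ}

variable {K : ℕ} {v : Fin K → ℝ}

lemma rev_nonneg (hv0 : ∀ k, 0 < v k) {x : Fin K → ℝ} (hx : ∀ j, 0 ≤ x j) (k : Fin K) :
    0 ≤ rev v x k :=
  mul_nonneg (hv0 k).le (Finset.sum_nonneg fun j _ => hx j)

lemma opt_pos (hv0 : ∀ k, 0 < v k) (hv : StrictMono v) {y : Fin K → ℝ}
    (hy : IsMarket K y) {k : Fin K} (hk : OptPrice v y k) : 0 < y k := by
  classical
  obtain ⟨j, hj⟩ : ∃ j, 0 < y j := by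
    by_contra h
    push_neg at h
    have : ∑ j, y j = 0 :=
      Finset.sum_eq_zero fun j _ => le_antisymm (h j) (hy.1 j)
    rw [hy.2] at this; norm_num at this
  have hrevj : 0 < rev v y j := by
    have h1 : y j ≤ ∑ j' ∈ Finset.Ici j, y j' :=
      Finset.single_le_sum (fun i _ => hy.1 i) (Finset.mem_Ici.2 le_rfl)
    have := mul_pos (hv0 j) hj
    calc (0:ℝ) < v j * y j := this
      _ ≤ rev v y j := by unfold rev; exact mul_le_mul_of_nonneg_left h1 (hv0 j).le
  have hRpos : 0 < rev v y k := lt_of_lt_of_le hrevj (hk j)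
  have hT : 0 < ∑ j' ∈ Finset.Ici k, y j' := by
    by_contra h
    push_neg at h
    have : rev v y k ≤ 0 := mul_nonpos_of_nonneg_of_nonpos (hv0 k).le h
    linarith
  by_contra hyk
  push_neg at hyk
  have hyk0 : y k = 0 := le_antisymm hyk (hy.1 k)
  set F := (Finset.Ici k).filter (fun j' => 0 < y j') with hF
  have hFne : F.Nonempty := by
    by_contra h
    rw [Finset.not_nonempty_iff_eq_empty] at h
    have : ∑ j' ∈ Finset.Ici k, y j' = 0 := by
      apply Finset.sum_eq_zero
      intro a ha
      by_contra ha0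
      have : a ∈ F := Finset.mem_filter.2 ⟨ha, lt_of_le_of_ne (hy.1 a) (Ne.symm ha0)⟩
      rw [h] at this; exact absurd this (Finset.notMem_empty a)
    linarith
  obtain ⟨j₁, hj₁, hj₁min⟩ : ∃ j₁ ∈ F, ∀ a ∈ F, j₁ ≤ a :=
    ⟨F.min' hFne, Finset.min'_mem _ _, fun a ha => Finset.min'_le _ _ ha⟩
  obtain ⟨hj₁Ici, hj₁pos⟩ := Finset.mem_filter.1 hj₁
  have hkj₁ : k ≤ j₁ := Finset.mem_Ici.1 hj₁Ici
  have hklt : k < j₁ := lt_of_le_of_ne hkj₁ (by rintro rfl; rw [hyk0] at hj₁pos; linarith)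
  have hun : Finset.Ici k = Finset.Ico k j₁ ∪ Finset.Ici j₁ := by
    ext a
    simp only [Finset.mem_Ici, Finset.mem_union, Finset.mem_Ico]
    constructor
    · intro ha
      rcases lt_or_ge a j₁ with h | h
      · exact Or.inl ⟨ha, h⟩
      · exact Or.inr h
    · rintro (⟨h, _⟩ | h)
      · exact h
      · exact le_trans hkj₁ h
  have hdis : Disjoint (Finset.Ico k j₁) (Finset.Ici j₁) := by
    rw [Finset.disjoint_left]
    intro a ha ha'
    exact absurd (Finset.mem_Ici.1 ha') (not_le.2 (Finset.mem_Ico.1 ha).2)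
  have hsplit : ∑ j' ∈ Finset.Ici k, y j' = ∑ j' ∈ Finset.Ici j₁, y j' := by
    rw [hun, Finset.sum_union hdis]
    have hz : ∑ j' ∈ Finset.Ico k j₁, y j' = 0 := by
      apply Finset.sum_eq_zero
      intro a ha
      obtain ⟨ha1, ha2⟩ := Finset.mem_Ico.1 ha
      by_contra ha0
      have haF : a ∈ F := Finset.mem_filter.2 ⟨Finset.mem_Ici.2 ha1,
        lt_of_le_of_ne (hy.1 a) (Ne.symm ha0)⟩
      exact absurd ha2 (not_lt.2 (hj₁min a haF))
    rw [hz, zero_add]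
  have : rev v y k < rev v y j₁ := by
    unfold rev
    rw [hsplit]
    exact mul_lt_mul_of_pos_right (hv hklt) (by rw [← hsplit]; exact hT)
  exact absurd (hk j₁) (not_le.2 this)

lemma lemB (hv0 : ∀ k, 0 < v k) (hv : StrictMono v)
    (xS : Finset (Fin K) → Fin K → ℝ)
    (hxS : ∀ S, S.Nonempty → IsCharMarket v S (xS S)) :
    ∀ n : ℕ, ∀ y : Fin K → ℝ, IsMarket K y →
      (K+1) * {j | 0 < y j}.ncard + (K - {k | OptPrice v y k}.ncard) ≤ n →
      y ∈ convexHull ℝ (xS '' {S | ∀ k, OptPrice v y k → k ∈ S}) := by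
  intro n
  induction n with
  | zero =>
    intro y hy hm
    exfalso
    obtain ⟨j, hj⟩ : ∃ j, 0 < y j := by
      by_contra h
      push_neg at h
      have : ∑ j, y j = 0 := Finset.sum_eq_zero fun j _ => le_antisymm (h j) (hy.1 j)
      rw [hy.2] at this; norm_num at this
    have h1 : 0 < {j | 0 < y j}.ncard := by
      rw [Set.ncard_pos (Set.toFinite _)]
      exact ⟨j, hj⟩
    have h2 : 0 < (K+1) * {j | 0 < y j}.ncard := Nat.mul_pos (Nat.succ_pos K) h1
    omega
  | succ n ih =>
    intro y hy hm
    classical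
    have hK0 : 0 < K := by
      by_contra h
      push_neg at h
      have hK : K = 0 := by omega
      subst hK
      have := hy.2
      simp at this
    obtain ⟨k₀, hk₀⟩ : ∃ k, OptPrice v y k := by
      obtain ⟨k, _, hk⟩ := Finset.exists_max_image Finset.univ (rev v y)
        ⟨⟨0, hK0⟩, Finset.mem_univ _⟩
      exact ⟨k, fun i => hk i (Finset.mem_univ i)⟩
    set O : Finset (Fin K) := Finset.univ.filter (fun k => OptPrice v y k) with hO
    have hOne : O.Nonempty := ⟨k₀, by simp [hO, hk₀]⟩
    obtain ⟨he_mkt, he_zero, he_rev⟩ := hxS O hOne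
    set e := xS O with he
    set R := rev v y k₀ with hR
    set c := rev v e k₀ with hc
    have hk₀O : k₀ ∈ O := by simp [hO, hk₀]
    have heO : ∀ j, 0 < e j → j ∈ O := by
      intro j hj
      by_contra h
      rw [he_zero j h] at hj; linarith
    have hceq : ∀ k ∈ O, rev v e k = c := fun k hk => he_rev k hk k₀ hk₀O
    have hyR : ∀ k ∈ O, rev v y k = R := by
      intro k hk
      have hopt : OptPrice v y k := (Finset.mem_filter.1 hk).2
      exact le_antisymm (hk₀ k) (hopt k₀)
    have hRlt : ∀ i, ¬ OptPrice v y i → rev v y i < R := by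
      intro i hi
      by_contra h
      push_neg at h
      exact hi fun i' => le_trans (hk₀ i') h
    have heMem : e ∈ xS '' {S | ∀ k, OptPrice v y k → k ∈ S} :=
      ⟨O, fun k hk => by simp [hO, hk], rfl⟩
    by_cases hye : y = e
    · exact subset_convexHull ℝ _ ⟨O, fun k hk => by simp [hO, hk], hye.symm⟩
    -- thresholds
    set T1 := Finset.univ.filter (fun j => 0 < e j) with hT1
    have hT1ne : T1.Nonempty := by
      by_contra h
      rw [Finset.not_nonempty_iff_eq_empty] at h
      have : ∑ j, e j = 0 := by
        apply Finset.sum_eq_zero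
        intro a _
        by_contra ha
        have : a ∈ T1 := by
          simp [hT1]
          exact lt_of_le_of_ne (he_mkt.1 a) (Ne.symm ha)
        rw [h] at this; exact absurd this (Finset.notMem_empty a)
      rw [he_mkt.2] at this; norm_num at this
    set T2 := Finset.univ.filter (fun i => ¬ OptPrice v y i ∧ rev v e i < c) with hT2
    set Λ := (T1.image fun j => y j / e j) ∪
      (T2.image fun i => (R - rev v y i) / (c - rev v e i)) with hΛ
    have hΛne : Λ.Nonempty := by
      obtain ⟨j, hj⟩ := hT1ne
      exact ⟨y j / e j, Finset.mem_union_left _ (Finset.mem_image_of_mem _ hj)⟩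
    set lam := Λ.min' hΛne with hlam
    have hlam_le : ∀ x ∈ Λ, lam ≤ x := fun x hx => Finset.min'_le _ _ hx
    have hlam_pos : 0 < lam := by
      have hmem : lam ∈ (T1.image fun j => y j / e j) ∪
          (T2.image fun i => (R - rev v y i) / (c - rev v e i)) := Finset.min'_mem Λ hΛne
      rw [Finset.mem_union] at hmem
      rcases hmem with h | h
      · obtain ⟨j, hjT, hje⟩ := Finset.mem_image.1 h
        have hje' : 0 < e j := (Finset.mem_filter.1 hjT).2
        have hjy : 0 < y j :=
          opt_pos hv0 hv hy (Finset.mem_filter.1 (heO j hje')).2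
        rw [← hje]
        exact div_pos hjy hje'
      · obtain ⟨i, hiT, hie⟩ := Finset.mem_image.1 h
        obtain ⟨hi1, hi2⟩ := (Finset.mem_filter.1 hiT).2
        rw [← hie]
        exact div_pos (by linarith [hRlt i hi1]) (by linarith)
    have hle : ∀ j, lam * e j ≤ y j := by
      intro j
      by_cases hej : 0 < e j
      · have hmem : y j / e j ∈ Λ := Finset.mem_union_left _
          (Finset.mem_image_of_mem _ (by simp [hT1, hej]))
        have h1 : lam ≤ y j / e j := hlam_le _ hmem
        calc lam * e j ≤ (y j / e j) * e j := mul_le_mul_of_nonneg_right h1 hej.le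
          _ = y j := div_mul_cancel₀ _ (ne_of_gt hej)
      · have : e j = 0 := le_antisymm (not_lt.1 hej) (he_mkt.1 j)
        rw [this, mul_zero]
        exact hy.1 j
    have hlam_lt1 : lam < 1 := by
      by_contra hge
      push_neg at hge
      apply hye
      have hall : ∀ j, e j ≤ y j := by
        intro j
        calc e j = 1 * e j := (one_mul _).symm
          _ ≤ lam * e j := mul_le_mul_of_nonneg_right hge (he_mkt.1 j)
          _ ≤ y j := hle j
      funext j
      have hsum : ∑ j', (y j' - e j') = 0 := by
        rw [Finset.sum_sub_distrib, hy.2, he_mkt.2]; ring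
      have := (Finset.sum_eq_zero_iff_of_nonneg
        (fun j' _ => sub_nonneg.2 (hall j'))).1 hsum j (Finset.mem_univ j)
      linarith
    set y' : Fin K → ℝ := fun j => (1 - lam)⁻¹ * (y j - lam * e j) with hy'
    have h1lam : 0 < 1 - lam := by linarith
    have hy'_mkt : IsMarket K y' := by
      constructor
      · intro j
        apply mul_nonneg (inv_nonneg.2 h1lam.le)
        linarith [hle j]
      · rw [hy']
        simp only [← Finset.mul_sum, Finset.sum_sub_distrib, ← Finset.mul_sum, hy.2, he_mkt.2]
        field_simp
    have hrev' : ∀ i, rev v y' i = (1 - lam)⁻¹ * (rev v y i - lam * rev v e i) := by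
      intro i
      unfold rev
      rw [hy']
      simp only [← Finset.mul_sum, Finset.sum_sub_distrib, ← Finset.mul_sum]
      ring
    have hkey : ∀ i, rev v y i - lam * rev v e i ≤ R - lam * c := by
      intro i
      by_cases hopt : OptPrice v y i
      · have hiO : i ∈ O := by simp [hO, hopt]
        rw [hyR i hiO, hceq i hiO]
      · by_cases hlt : rev v e i < c
        · have hmem : (R - rev v y i) / (c - rev v e i) ∈ Λ :=
            Finset.mem_union_right _ (Finset.mem_image_of_mem _ (by simp [hT2, hopt, hlt]))
          have h1 := hlam_le _ hmem
          have hden : 0 < c - rev v e i := by linarith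
          rw [le_div_iff₀ hden] at h1
          linarith
        · push_neg at hlt
          have := hRlt i hopt
          nlinarith [hlam_pos]
    have hOopt' : ∀ k, OptPrice v y k → OptPrice v y' k := by
      intro k hk i
      rw [hrev' i, hrev' k]
      have hkO : k ∈ O := by simp [hO, hk]
      apply mul_le_mul_of_nonneg_left _ (inv_nonneg.2 h1lam.le)
      rw [hyR k hkO, hceq k hkO]
      exact hkey i
    have hsupp_sub : {j | 0 < y' j} ⊆ {j | 0 < y j} := by
      intro j hj
      simp only [Set.mem_setOf_eq] at hj ⊢
      by_contra h
      push_neg at h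
      have hyj : y j = 0 := le_antisymm h (hy.1 j)
      have hej : e j = 0 := by
        by_contra he0
        have hpe : 0 < e j := lt_of_le_of_ne (he_mkt.1 j) (Ne.symm he0)
        have := opt_pos hv0 hv hy (Finset.mem_filter.1 (heO j hpe)).2
        linarith
      rw [hy'] at hj
      simp [hyj, hej] at hj
    have hopt_sub : {k | OptPrice v y k} ⊆ {k | OptPrice v y' k} := fun k hk => hOopt' k hk
    have hmin_mem : lam ∈ (T1.image fun j => y j / e j) ∪
        (T2.image fun i => (R - rev v y i) / (c - rev v e i)) := Finset.min'_mem Λ hΛne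
    rw [Finset.mem_union] at hmin_mem
    have hmeas' : (K+1) * {j | 0 < y' j}.ncard + (K - {k | OptPrice v y' k}.ncard) ≤ n := by
      have hcard_supp_le : {j | 0 < y' j}.ncard ≤ {j | 0 < y j}.ncard :=
        Set.ncard_le_ncard hsupp_sub (Set.toFinite _)
      have hcard_opt_le : {k | OptPrice v y k}.ncard ≤ {k | OptPrice v y' k}.ncard :=
        Set.ncard_le_ncard hopt_sub (Set.toFinite _)
      rcases hmin_mem with h | h
      · -- support shrinks
        obtain ⟨js, hjsT1, hjseq⟩ := Finset.mem_image.1 h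
        have hjse : 0 < e js := (Finset.mem_filter.1 hjsT1).2
        have hy'js : y' js = 0 := by
          have hthis : lam * e js = y js := by
            rw [← hjseq, div_mul_cancel₀ _ (ne_of_gt hjse)]
          show (1 - lam)⁻¹ * (y js - lam * e js) = 0
          rw [hthis, sub_self, mul_zero]
        have hyjs : 0 < y js :=
          opt_pos hv0 hv hy (Finset.mem_filter.1 (heO js hjse)).2
        have hss : {j | 0 < y' j} ⊂ {j | 0 < y j} := by
          refine ⟨hsupp_sub, fun hsub => ?_⟩
          have := hsub hyjs
          simp only [Set.mem_setOf_eq, hy'js] at this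
          linarith
        have hcard : {j | 0 < y' j}.ncard < {j | 0 < y j}.ncard :=
          Set.ncard_lt_ncard hss (Set.toFinite _)
        have hPQ : (K+1) * {j | 0 < y' j}.ncard + (K+1) ≤ (K+1) * {j | 0 < y j}.ncard := by
          have h1 : {j | 0 < y' j}.ncard + 1 ≤ {j | 0 < y j}.ncard := hcard
          calc (K+1) * {j | 0 < y' j}.ncard + (K+1)
              = (K+1) * ({j | 0 < y' j}.ncard + 1) := by ring
            _ ≤ (K+1) * {j | 0 < y j}.ncard := Nat.mul_le_mul_left _ h1
        generalize hA : (K+1) * {j | 0 < y j}.ncard = A at hm hPQ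
        generalize hA' : (K+1) * {j | 0 < y' j}.ncard = A' at hPQ ⊢
        omega
      · -- optimal set grows
        obtain ⟨is, hisT2, hiseq⟩ := Finset.mem_image.1 h
        obtain ⟨his1, his2⟩ := (Finset.mem_filter.1 hisT2).2
        have hden : 0 < c - rev v e is := by linarith
        have heq : rev v y is - lam * rev v e is = R - lam * c := by
          have : lam * (c - rev v e is) = R - rev v y is := by
            rw [← hiseq, div_mul_cancel₀ _ (ne_of_gt hden)]
          nlinarith [this]
        have hopt_is : OptPrice v y' is := by
          intro i
          rw [hrev' i, hrev' is]
          apply mul_le_mul_of_nonneg_left _ (inv_nonneg.2 h1lam.le)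
          rw [heq]
          exact hkey i
        have hss : {k | OptPrice v y k} ⊂ {k | OptPrice v y' k} := by
          refine ⟨hopt_sub, fun hsub => his1 (hsub hopt_is)⟩
        have hcard : {k | OptPrice v y k}.ncard < {k | OptPrice v y' k}.ncard :=
          Set.ncard_lt_ncard hss (Set.toFinite _)
        have hbK : {k | OptPrice v y' k}.ncard ≤ K := by
          have h1 : {k | OptPrice v y' k}.ncard ≤ (Set.univ : Set (Fin K)).ncard :=
            Set.ncard_le_ncard (Set.subset_univ _) (Set.toFinite _)
          rwa [Set.ncard_univ, Nat.card_eq_fintype_card, Fintype.card_fin] at h1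
        have hPQ : (K+1) * {j | 0 < y' j}.ncard ≤ (K+1) * {j | 0 < y j}.ncard :=
          Nat.mul_le_mul_left _ hcard_supp_le
        generalize hA : (K+1) * {j | 0 < y j}.ncard = A at hm hPQ
        generalize hA' : (K+1) * {j | 0 < y' j}.ncard = A' at hPQ ⊢
        omega
    have hmem' := ih y' hy'_mkt hmeas'
    have hsubset : (xS '' {S | ∀ k, OptPrice v y' k → k ∈ S}) ⊆
        xS '' {S | ∀ k, OptPrice v y k → k ∈ S} :=
      Set.image_mono (fun S hS k hk => hS k (hOopt' k hk))
    have hmem'' : y' ∈ convexHull ℝ (xS '' {S | ∀ k, OptPrice v y k → k ∈ S}) :=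
      convexHull_mono hsubset hmem'
    have heHull : e ∈ convexHull ℝ (xS '' {S | ∀ k, OptPrice v y k → k ∈ S}) :=
      subset_convexHull ℝ _ heMem
    have hcomb : y = lam • e + (1 - lam) • y' := by
      funext j
      simp only [Pi.add_apply, Pi.smul_apply, smul_eq_mul, hy']
      field_simp
      ring
    have hfin := (convex_convexHull ℝ (xS '' {S | ∀ k, OptPrice v y k → k ∈ S}))
      heHull hmem'' hlam_pos.le h1lam.le (by ring)
    rwa [← hcomb] at hfin

end Aux

theorem stmt8 {K : ℕ} (hK : 2 ≤ K) (v : Fin K → ℝ)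
    (hv0 : ∀ k, 0 < v k) (hv : StrictMono v)
    (xstar : Fin K → ℝ) (hxstar : IsMarket K xstar) (hxpos : ∀ k, 0 < xstar k)
    (xS : Finset (Fin K) → Fin K → ℝ)
    (hxS : ∀ S : Finset (Fin K), S.Nonempty → IsCharMarket v S (xS S)) :
    xstar ∈ intrinsicInterior ℝ
        (convexHull ℝ (xS '' {S : Finset (Fin K) | ∀ k, OptPrice v xstar k → k ∈ S})) := by
  classical
  obtain ⟨k₀, hk₀⟩ : ∃ k, OptPrice v xstar k := by
    obtain ⟨k, _, hk⟩ := Finset.exists_max_image Finset.univ (rev v xstar)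
      ⟨⟨0, by omega⟩, Finset.mem_univ _⟩
    exact ⟨k, fun i => hk i (Finset.mem_univ i)⟩
  set P : Finset (Fin K) := Finset.univ.filter (fun k => OptPrice v xstar k) with hP
  have hk₀P : k₀ ∈ P := by simp [hP, hk₀]
  set Ff : Finset (Finset (Fin K)) := Finset.univ.filter (fun S => P ⊆ S) with hFf
  have hFne : ∀ S ∈ Ff, S.Nonempty := fun S hS => ⟨k₀, (Finset.mem_filter.1 hS).2 hk₀P⟩
  have hFfne : Ff.Nonempty := ⟨Finset.univ, by simp [hFf]⟩
  set N : ℕ := Ff.card with hN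
  have hNpos : 0 < N := Finset.card_pos.2 hFfne
  have hNRpos : (0:ℝ) < (N:ℝ) := by exact_mod_cast hNpos
  set b : Fin K → ℝ := fun j => (N:ℝ)⁻¹ * ∑ S ∈ Ff, xS S j with hb
  have hb_nonneg : ∀ j, 0 ≤ b j := by
    intro j
    apply mul_nonneg (inv_nonneg.2 hNRpos.le)
    exact Finset.sum_nonneg fun S hS => ((hxS S (hFne S hS)).1.1 j)
  have hb_le1 : ∀ j, b j ≤ 1 := by
    intro j
    have h1 : ∑ S ∈ Ff, xS S j ≤ ∑ S ∈ Ff, 1 := by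
      apply Finset.sum_le_sum
      intro S hS
      have hm := (hxS S (hFne S hS)).1
      calc xS S j ≤ ∑ j', xS S j' :=
            Finset.single_le_sum (fun i _ => hm.1 i) (Finset.mem_univ j)
        _ = 1 := hm.2
    have h2 : (∑ S ∈ Ff, (1:ℝ)) = (N:ℝ) := by simp [hN]
    calc b j ≤ (N:ℝ)⁻¹ * (N:ℝ) := by
          apply mul_le_mul_of_nonneg_left _ (inv_nonneg.2 hNRpos.le)
          rw [← h2]; exact h1
      _ = 1 := by field_simp
  have hrevb : ∀ i, rev v b i = (N:ℝ)⁻¹ * ∑ S ∈ Ff, rev v (xS S) i := by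
    intro i
    show v i * (∑ j ∈ Finset.Ici i, (N:ℝ)⁻¹ * ∑ S ∈ Ff, xS S j)
      = (N:ℝ)⁻¹ * ∑ S ∈ Ff, v i * ∑ j ∈ Finset.Ici i, xS S j
    simp only [← Finset.mul_sum]
    rw [Finset.sum_comm]
    ring
  have hrevb_eq : ∀ k ∈ P, rev v b k = rev v b k₀ := by
    intro k hk
    rw [hrevb, hrevb]
    congr 1
    apply Finset.sum_congr rfl
    intro S hS
    have hPS : P ⊆ S := (Finset.mem_filter.1 hS).2
    exact (hxS S (hFne S hS)).2.2 k (hPS hk) k₀ (hPS hk₀P)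
  set Rb := rev v b k₀ with hRb
  have hRb0 : 0 ≤ Rb := rev_nonneg hv0 hb_nonneg k₀
  set Rstar := rev v xstar k₀ with hRstar
  have hRstarlt : ∀ i, ¬ OptPrice v xstar i → rev v xstar i < Rstar := by
    intro i hi
    by_contra h
    push_neg at h
    exact hi fun i' => le_trans (hk₀ i') h
  obtain ⟨δ, hδpos, hδle⟩ : ∃ δ : ℝ, 0 < δ ∧
      ∀ i, ¬ OptPrice v xstar i → δ ≤ Rstar - rev v xstar i := by
    by_cases hbad : (Finset.univ.filter (fun i => ¬ OptPrice v xstar i)).Nonempty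
    · set Tbad := Finset.univ.filter (fun i => ¬ OptPrice v xstar i) with hTbad
      refine ⟨(Tbad.image fun i => Rstar - rev v xstar i).min' (hbad.image _), ?_, ?_⟩
      · have hmem := Finset.min'_mem (Tbad.image fun i => Rstar - rev v xstar i) (hbad.image _)
        obtain ⟨i, hiT, heq⟩ := Finset.mem_image.1 hmem
        rw [← heq]
        have := hRstarlt i (Finset.mem_filter.1 hiT).2
        linarith
      · intro i hi
        exact Finset.min'_le _ _ (Finset.mem_image_of_mem _ (by simp [hTbad, hi]))
    · exact ⟨1, one_pos, fun i hi => absurd ⟨i, by simp [hi]⟩ hbad⟩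
  obtain ⟨jm, _, hjm⟩ := Finset.exists_min_image Finset.univ xstar ⟨k₀, Finset.mem_univ _⟩
  set ε := min (xstar jm) (δ / (Rb + 1)) with hε
  have hεpos : 0 < ε := lt_min (hxpos jm) (div_pos hδpos (by linarith))
  have hεx : ∀ j, ε ≤ xstar j := fun j =>
    le_trans (min_le_left _ _) (hjm j (Finset.mem_univ j))
  have hεRb : ε * Rb ≤ δ := by
    have h1 : ε ≤ δ / (Rb + 1) := min_le_right _ _
    have h2 : ε * (Rb + 1) ≤ δ := by
      rw [← le_div_iff₀ (by linarith : (0:ℝ) < Rb + 1)]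
      exact h1
    nlinarith [hεpos]
  set z : Fin K → ℝ := fun j => (1+ε) * xstar j - ε * b j with hz
  have hz_mkt : IsMarket K z := by
    constructor
    · intro j
      have h1 := hb_le1 j
      have h2 := hεx j
      have h3 := hxpos j
      have : (1+ε) * xstar j - ε * b j ≥ xstar j - ε := by nlinarith
      show 0 ≤ (1+ε) * xstar j - ε * b j
      linarith
    · show ∑ j, ((1+ε) * xstar j - ε * b j) = 1
      have hbs : ∑ j, b j = 1 := by
        show ∑ j, (N:ℝ)⁻¹ * ∑ S ∈ Ff, xS S j = 1
        simp only [← Finset.mul_sum]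
        rw [Finset.sum_comm]
        have : ∑ S ∈ Ff, ∑ j, xS S j = ∑ S ∈ Ff, 1 :=
          Finset.sum_congr rfl fun S hS => (hxS S (hFne S hS)).1.2
        rw [this, Finset.sum_const, nsmul_eq_mul, mul_one]
        exact inv_mul_cancel₀ (by exact_mod_cast hNpos.ne')
      simp only [Finset.sum_sub_distrib, ← Finset.mul_sum, hxstar.2, hbs]
      ring
  have hrevz : ∀ i, rev v z i = (1+ε) * rev v xstar i - ε * rev v b i := by
    intro i
    show v i * (∑ j ∈ Finset.Ici i, ((1+ε) * xstar j - ε * b j)) = _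
    simp only [Finset.sum_sub_distrib, ← Finset.mul_sum]
    unfold rev
    ring
  have hPoptz : ∀ k, OptPrice v xstar k → OptPrice v z k := by
    intro k hk i
    rw [hrevz, hrevz]
    have hkr : rev v xstar k = Rstar := le_antisymm (hk₀ k) (hk k₀)
    have hkb : rev v b k = Rb := hrevb_eq k (Finset.mem_filter.2 ⟨Finset.mem_univ _, hk⟩)
    rw [hkr, hkb]
    by_cases hopt : OptPrice v xstar i
    · rw [le_antisymm (hk₀ i) (hopt k₀), hrevb_eq i (Finset.mem_filter.2 ⟨Finset.mem_univ _, hopt⟩)]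
    · have h1 : δ ≤ Rstar - rev v xstar i := hδle i hopt
      have h2 : 0 ≤ rev v b i := rev_nonneg hv0 hb_nonneg i
      nlinarith [hεpos, hεRb, mul_nonneg hεpos.le h2,
        mul_nonneg hεpos.le (by linarith : (0:ℝ) ≤ Rstar - rev v xstar i)]
  have hz_hull := lemB hv0 hv xS hxS
    ((K+1) * {j | 0 < z j}.ncard + (K - {k | OptPrice v z k}.ncard)) z hz_mkt le_rfl
  have hz_hull' : z ∈ convexHull ℝ (xS '' {S | ∀ k, OptPrice v xstar k → k ∈ S}) := by
    refine convexHull_mono (Set.image_mono ?_) hz_hull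
    intro S hS k hk
    exact hS k (hPoptz k hk)
  set Fp : Finset (Fin K → ℝ) := Ff.image xS with hFp
  have hFpcoe : (Fp : Set (Fin K → ℝ)) = xS '' {S | ∀ k, OptPrice v xstar k → k ∈ S} := by
    have hsets : (↑Ff : Set (Finset (Fin K))) = {S | ∀ k, OptPrice v xstar k → k ∈ S} := by
      ext S
      simp only [Finset.mem_coe, Set.mem_setOf_eq, hFf, Finset.mem_filter, Finset.mem_univ,
        true_and]
      constructor
      · intro h k hk
        exact h (by simp [hP, hk])
      · intro h k hkP
        exact h k (by simpa [hP] using hkP)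
    rw [hFp, Finset.coe_image, hsets]
  have hzmem : z ∈ convexHull ℝ (Fp : Set (Fin K → ℝ)) := by
    rw [hFpcoe]; exact hz_hull'
  rw [Finset.convexHull_eq] at hzmem
  obtain ⟨wz, hwz0, hwz1, hwzc⟩ := hzmem
  rw [Finset.centerMass_eq_of_sum_1 _ _ hwz1] at hwzc
  simp only [id_eq] at hwzc
  set wb : (Fin K → ℝ) → ℝ := fun f => (N:ℝ)⁻¹ * (Ff.filter (fun S => xS S = f)).card with hwb
  have hwb_pos : ∀ f ∈ Fp, 0 < wb f := by
    intro f hf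
    obtain ⟨S, hS, hSf⟩ := Finset.mem_image.1 hf
    have hne : (Ff.filter (fun S => xS S = f)).Nonempty := ⟨S, Finset.mem_filter.2 ⟨hS, hSf⟩⟩
    have : (0:ℝ) < (Ff.filter (fun S => xS S = f)).card := by
      exact_mod_cast Finset.card_pos.2 hne
    show 0 < (N:ℝ)⁻¹ * (Ff.filter (fun S => xS S = f)).card
    exact mul_pos (inv_pos.2 hNRpos) this
  have hmaps : ∀ S ∈ Ff, xS S ∈ Fp := fun S hS => Finset.mem_image_of_mem _ hS
  have hwb_sum : ∑ f ∈ Fp, wb f = 1 := by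
    show ∑ f ∈ Fp, (N:ℝ)⁻¹ * (Ff.filter (fun S => xS S = f)).card = 1
    rw [← Finset.mul_sum]
    have h1 : ∑ f ∈ Fp, ((Ff.filter (fun S => xS S = f)).card : ℝ)
        = ∑ f ∈ Fp, ∑ S ∈ Ff.filter (fun S => xS S = f), (1:ℝ) := by
      apply Finset.sum_congr rfl
      intro f _
      simp
    rw [h1, Finset.sum_fiberwise_of_maps_to hmaps, Finset.sum_const, nsmul_eq_mul, mul_one]
    exact inv_mul_cancel₀ (by exact_mod_cast hNpos.ne')
  have hwb_comb : ∑ f ∈ Fp, wb f • f = b := by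
    funext j
    have hfib : ∀ f ∈ Fp, ∑ S ∈ Ff.filter (fun S => xS S = f), xS S j
        = ((Ff.filter (fun S => xS S = f)).card : ℝ) * f j := by
      intro f _
      rw [Finset.sum_congr rfl (fun S hS => by
        rw [(Finset.mem_filter.1 hS).2] : ∀ S ∈ Ff.filter (fun S => xS S = f), xS S j = f j)]
      simp [Finset.sum_const, mul_comm]
    have hkey : ∑ f ∈ Fp, ((Ff.filter (fun S => xS S = f)).card : ℝ) * f j
        = ∑ S ∈ Ff, xS S j := by
      rw [← Finset.sum_fiberwise_of_maps_to hmaps (fun S => xS S j)]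
      exact Finset.sum_congr rfl fun f hf => (hfib f hf).symm
    show (∑ f ∈ Fp, wb f • f) j = (N:ℝ)⁻¹ * ∑ S ∈ Ff, xS S j
    rw [Finset.sum_apply]
    simp only [Pi.smul_apply, smul_eq_mul, hwb]
    rw [← hkey, Finset.mul_sum]
    apply Finset.sum_congr rfl
    intro f _
    ring
  set w : (Fin K → ℝ) → ℝ := fun f => (1+ε)⁻¹ * wz f + (ε/(1+ε)) * wb f with hw
  have hw_pos : ∀ f ∈ Fp, 0 < w f := by
    intro f hf
    have h1 : 0 ≤ (1+ε)⁻¹ * wz f :=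
      mul_nonneg (by positivity) (hwz0 f hf)
    have h2 : 0 < (ε/(1+ε)) * wb f :=
      mul_pos (div_pos hεpos (by linarith)) (hwb_pos f hf)
    show 0 < (1+ε)⁻¹ * wz f + (ε/(1+ε)) * wb f
    linarith
  have hw_sum : ∑ f ∈ Fp, w f = 1 := by
    show ∑ f ∈ Fp, ((1+ε)⁻¹ * wz f + (ε/(1+ε)) * wb f) = 1
    rw [Finset.sum_add_distrib, ← Finset.mul_sum, ← Finset.mul_sum, hwz1, hwb_sum]
    field_simp
  have hw_comb : ∑ f ∈ Fp, w f • f = xstar := by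
    have h1 : ∑ f ∈ Fp, w f • f = (1+ε)⁻¹ • z + (ε/(1+ε)) • b := by
      have : ∀ f ∈ Fp, w f • f = (1+ε)⁻¹ • (wz f • f) + (ε/(1+ε)) • (wb f • f) := by
        intro f _
        show ((1+ε)⁻¹ * wz f + (ε/(1+ε)) * wb f) • f = _
        rw [add_smul, mul_smul, mul_smul]
      rw [Finset.sum_congr rfl this, Finset.sum_add_distrib, ← Finset.smul_sum, ← Finset.smul_sum,
        hwzc, hwb_comb]
    rw [h1]
    funext j
    have h1ε : (0:ℝ) < 1 + ε := by linarith
    show (1+ε)⁻¹ * ((1+ε) * xstar j - ε * b j) + (ε/(1+ε)) * b j = xstar j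
    field_simp
    ring
  have hfinal := posCombo_mem_intrinsicInterior Fp w hw_pos hw_sum xstar hw_comb
  rwa [hFpcoe] at hfinal
end

section
/- Suppose a market x can be written as x = ∑_{i=1}^m α_i x^{S_i}, where m ≥ 1, α_i > 0 with ∑_{i=1}^m α_i = 1, and each S_i is a subset of {1,…,K} containing a fixed index k. Then for any ℓ ∈ {1,…,K}, price v_ℓ is optimal for x if and only if ℓ ∈ S_i for all i = 1,…,m. -/
open Finset

lemma rev_linear {K : ℕ} (v : Fin K → ℝ) {m : ℕ} (α : Fin m → ℝ)
    (y : Fin m → Fin K → ℝ) (ℓ : Fin K) :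
    rev v (∑ i, α i • y i) ℓ = ∑ i, α i * rev v (y i) ℓ := by
  simp only [rev, Finset.sum_apply, Pi.smul_apply, smul_eq_mul, Finset.mul_sum]
  rw [Finset.sum_comm]
  congr 1; ext i
  exact Finset.sum_congr rfl fun j _ => by ring

lemma char_lemma {K : ℕ} (v : Fin K → ℝ) (hv0 : ∀ k, 0 < v k) (hv : StrictMono v)
    {S : Finset (Fin K)} {y : Fin K → ℝ} (hy : IsCharMarket v S y)
    {s₀ : Fin K} (hs₀ : s₀ ∈ S) :
    (∀ ℓ, rev v y ℓ ≤ rev v y s₀) ∧ ∀ ℓ, rev v y ℓ = rev v y s₀ → ℓ ∈ S := by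
  obtain ⟨⟨hpos, hsum⟩, hzero, heq⟩ := hy
  have hR : 0 < rev v y s₀ := by
    have hex : ∃ j, 0 < y j := by
      by_contra h
      push_neg at h
      have : ∀ j, y j = 0 := fun j => le_antisymm (h j) (hpos j)
      simp [this] at hsum
    obtain ⟨j, hj⟩ := hex
    have hjS : j ∈ S := by
      by_contra hjS
      exact absurd (hzero j hjS) (ne_of_gt hj)
    have h1 : y j ≤ ∑ i ∈ Finset.Ici j, y i :=
      Finset.single_le_sum (fun i _ => hpos i) (Finset.mem_Ici.2 le_rfl)
    have : 0 < rev v y j := by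
      have := mul_pos (hv0 j) (lt_of_lt_of_le hj h1)
      simpa [rev] using this
    rwa [heq j hjS s₀ hs₀] at this
  have hstrict : ∀ ℓ ∉ S, rev v y ℓ < rev v y s₀ := by
    intro ℓ hℓ
    by_cases hT : (S ∩ Finset.Ici ℓ).Nonempty
    · set i' := (S ∩ Finset.Ici ℓ).min' hT with hi'
      have hi'mem := (S ∩ Finset.Ici ℓ).min'_mem hT
      rw [Finset.mem_inter, Finset.mem_Ici] at hi'mem
      obtain ⟨hi'S, hℓi'⟩ := hi'mem
      have hlt : ℓ < i' := lt_of_le_of_ne hℓi' (fun h => hℓ (h ▸ hi'S))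
      have htail : ∑ j ∈ Finset.Ici ℓ, y j = ∑ j ∈ Finset.Ici i', y j := by
        refine (Finset.sum_subset (Finset.Ici_subset_Ici.2 hℓi') ?_).symm
        intro j hj hj'
        rw [Finset.mem_Ici] at hj
        rw [Finset.mem_Ici, not_le] at hj'
        refine hzero j fun hjS => ?_
        exact absurd (Finset.min'_le _ j (Finset.mem_inter.2 ⟨hjS, Finset.mem_Ici.2 hj⟩)) (not_le.2 hj')
      have hReq : rev v y i' = rev v y s₀ := heq i' hi'S s₀ hs₀
      have ht : 0 < ∑ j ∈ Finset.Ici i', y j := by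
        rcases lt_or_eq_of_le (Finset.sum_nonneg fun j _ => hpos j) with h | h
        · exact h
        · exfalso
          rw [← hReq] at hR
          simp [rev, ← h] at hR
      calc rev v y ℓ = v ℓ * ∑ j ∈ Finset.Ici i', y j := by rw [rev, htail]
        _ < v i' * ∑ j ∈ Finset.Ici i', y j := by
            exact mul_lt_mul_of_pos_right (hv hlt) ht
        _ = rev v y s₀ := hReq
    · have : ∑ j ∈ Finset.Ici ℓ, y j = 0 := by
        refine Finset.sum_eq_zero fun j hj => hzero j fun hjS => ?_
        exact hT ⟨j, Finset.mem_inter.2 ⟨hjS, hj⟩⟩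
      rw [rev, this, mul_zero]
      exact hR
  constructor
  · intro ℓ
    by_cases hℓ : ℓ ∈ S
    · exact le_of_eq (heq ℓ hℓ s₀ hs₀)
    · exact le_of_lt (hstrict ℓ hℓ)
  · intro ℓ h
    by_contra hℓ
    exact absurd h (ne_of_lt (hstrict ℓ hℓ))

theorem stmt9 {K : ℕ} (hK : 2 ≤ K) (v : Fin K → ℝ)
    (hv0 : ∀ k, 0 < v k) (hv : StrictMono v)
    (xS : Finset (Fin K) → Fin K → ℝ)
    (hxS : ∀ S : Finset (Fin K), S.Nonempty → IsCharMarket v S (xS S))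
    (k : Fin K) (m : ℕ) (hm : 1 ≤ m) (α : Fin m → ℝ) (S : Fin m → Finset (Fin K))
    (hα : ∀ i, 0 < α i) (hαsum : ∑ i, α i = 1) (hkS : ∀ i, k ∈ S i)
    (x : Fin K → ℝ) (hx : IsMarket K x) (hxsum : x = ∑ i, α i • xS (S i))
    (ℓ : Fin K) :
    OptPrice v x ℓ ↔ ∀ i, ℓ ∈ S i := by
  have hcm : ∀ i : Fin m, IsCharMarket v (S i) (xS (S i)) :=
    fun i => hxS (S i) ⟨k, hkS i⟩
  have hcl := fun i : Fin m => char_lemma v hv0 hv (hcm i) (hkS i)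
  have hlin : ∀ j : Fin K, rev v x j = ∑ i, α i * rev v (xS (S i)) j := by
    intro j; rw [hxsum]; exact rev_linear v α _ j
  have hle : ∀ j : Fin K, rev v x j ≤ rev v x k := by
    intro j
    rw [hlin j, hlin k]
    exact Finset.sum_le_sum fun i _ =>
      mul_le_mul_of_nonneg_left ((hcl i).1 j) (le_of_lt (hα i))
  constructor
  · intro hopt
    have hkl : rev v x ℓ = rev v x k := le_antisymm (hle ℓ) (hopt k)
    have hzero : ∑ i, α i * (rev v (xS (S i)) k - rev v (xS (S i)) ℓ) = 0 := by
      have : ∑ i, α i * (rev v (xS (S i)) k - rev v (xS (S i)) ℓ)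
          = rev v x k - rev v x ℓ := by
        rw [hlin k, hlin ℓ, ← Finset.sum_sub_distrib]
        congr 1; ext i; ring
      rw [this, hkl, sub_self]
    have hterm : ∀ i ∈ Finset.univ (α := Fin m),
        α i * (rev v (xS (S i)) k - rev v (xS (S i)) ℓ) = 0 :=
      (Finset.sum_eq_zero_iff_of_nonneg fun i _ =>
        mul_nonneg (le_of_lt (hα i)) (sub_nonneg.2 ((hcl i).1 ℓ))).1 hzero
    intro i
    have := hterm i (Finset.mem_univ i)
    have heq : rev v (xS (S i)) ℓ = rev v (xS (S i)) k := by
      rcases mul_eq_zero.1 this with h | h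
      · exact absurd h (ne_of_gt (hα i))
      · linarith [sub_eq_zero.1 h]
    exact (hcl i).2 ℓ heq
  · intro hmem j
    have : rev v x ℓ = rev v x k := by
      rw [hlin ℓ, hlin k]
      congr 1; ext i
      obtain ⟨_, _, heq⟩ := hcm i
      rw [heq ℓ (hmem i) k (hkS i)]
    rw [this]
    exact hle j
end

section
/- Let K = 2, v_1 = 1, v_2 = 2, and x* = (1/2, 1/2). Let σ be the segmentation with σ(x*) = 1, and let φ be the pricing rule with φ_1(x*) = φ_2(x*) = 1/2 (this φ is optimal for σ). Then there is no direct segmentation that, with its direct pricing rule, induces the same joint distribution over valuations and prices as (σ, φ). -/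
open Finset

theorem stmt11 :
    ¬ ∃ (A : Finset (Fin 2)) (xs : Fin 2 → Fin 2 → ℝ) (w : Fin 2 → ℝ),
        IsDirectSeg (![1, 2]) (![1/2, 1/2]) A xs w ∧
        ∀ j k, directJoint A xs w j k =
          jointDist (Finsupp.single (![1/2, 1/2] : Fin 2 → ℝ) (1 : ℝ))
            (fun _ => ![1/2, 1/2]) j k := by
  rintro ⟨A, xs, w, ⟨hinj, hm, hopt, hw, hsum, havg⟩, hjd⟩
  have hR : ∀ j k : Fin 2, jointDist (Finsupp.single (![1/2,1/2] : Fin 2 → ℝ) 1)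
      (fun _ => ![1/2,1/2]) j k = 1/4 := by
    intro j k
    simp only [jointDist, Finsupp.support_single_ne_zero _ (one_ne_zero),
      Finset.sum_singleton, Finsupp.single_eq_same]
    fin_cases j <;> fin_cases k <;> norm_num
  have hmem : ∀ k : Fin 2, k ∈ A := by
    intro k
    by_contra h
    have := hjd k k
    rw [hR] at this
    simp [directJoint, h] at this
  have hx : ∀ k j : Fin 2, w k * xs k j = 1/4 := by
    intro k j
    have := hjd j k
    rwa [hR, directJoint, if_pos (hmem k)] at this
  have hxs : ∀ k : Fin 2, xs k 0 + xs k 1 = 1 := by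
    intro k
    have := (hm k (hmem k)).2
    simpa [Fin.sum_univ_two] using this
  have hwk : ∀ k : Fin 2, w k = 1/2 := by
    intro k
    have h1 := hx k 0
    have h2 := hx k 1
    have h3 := hxs k
    nlinarith [hw k (hmem k)]
  have hxval : ∀ k j : Fin 2, xs k j = 1/2 := by
    intro k j
    have := hx k j
    rw [hwk k] at this
    linarith
  have h01 : (0 : Fin 2) = 1 := hinj (hmem 0) (hmem 1) (by funext j; rw [hxval, hxval])
  exact absurd h01 (by decide)
end

section
/- Let K = 3, v_1 = 1, v_2 = 2, v_3 = 3, and x* = (1/2, 1/3, 1/6). Let σ be the segmentation with σ((1/2, 1/6, 1/3)) = 1/4, σ((1/2, 1/2, 0)) = 1/4, σ((1/2, 1/3, 1/6)) = 1/2, and let φ be the pricing rule charging price 1 with probability one in markets (1/2, 1/6, 1/3) and (1/2, 1/2, 0), and price 2 with probability one in market (1/2, 1/3, 1/6) (this φ is optimal for σ). Then there is no direct segmentation that, with its direct pricing rule, induces the same joint distribution over valuations and prices as (σ, φ). -/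
open Finset

theorem stmt12 :
    ¬ ∃ (A : Finset (Fin 3)) (xs : Fin 3 → Fin 3 → ℝ) (w : Fin 3 → ℝ),
        IsDirectSeg (![1, 2, 3]) (![1/2, 1/3, 1/6]) A xs w ∧
        ∀ j k, directJoint A xs w j k =
          jointDist
            (Finsupp.single (![1/2, 1/6, 1/3] : Fin 3 → ℝ) (1/4 : ℝ)
              + Finsupp.single (![1/2, 1/2, 0] : Fin 3 → ℝ) (1/4 : ℝ)
              + Finsupp.single (![1/2, 1/3, 1/6] : Fin 3 → ℝ) (1/2 : ℝ))
            (fun x => if x = ![1/2, 1/3, 1/6] then ![0, 1, 0] else ![1, 0, 0]) j k := by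
  classical
  rintro ⟨A, xs, w, ⟨hinj, hmkt, _hopt, hw, _hwsum, _havg⟩, hjoint⟩
  set a : Fin 3 → ℝ := ![1/2, 1/6, 1/3] with ha
  set b : Fin 3 → ℝ := ![1/2, 1/2, 0] with hb
  set c : Fin 3 → ℝ := ![1/2, 1/3, 1/6] with hc
  set σ : (Fin 3 → ℝ) →₀ ℝ :=
    Finsupp.single a (1/4) + Finsupp.single b (1/4) + Finsupp.single c (1/2) with hσ
  set φ : (Fin 3 → ℝ) → Fin 3 → ℝ :=
    fun x => if x = c then ![0, 1, 0] else ![1, 0, 0] with hφ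
  have hab : a ≠ b := by
    intro h; have := congrFun h 1
    simp [ha, hb, Matrix.cons_val_one, Matrix.head_cons] at this
  have hac : a ≠ c := by
    intro h; have := congrFun h 1
    simp [ha, hc, Matrix.cons_val_one, Matrix.head_cons] at this
  have hbc : b ≠ c := by
    intro h; have := congrFun h 1
    simp [hb, hc, Matrix.cons_val_one, Matrix.head_cons] at this
  have hσa : σ a = 1/4 := by
    simp [hσ, Finsupp.single_apply, Ne.symm hab, Ne.symm hac]
  have hσb : σ b = 1/4 := by
    simp [hσ, Finsupp.single_apply, hab, Ne.symm hbc]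
  have hσc : σ c = 1/2 := by
    simp [hσ, Finsupp.single_apply, hac, hbc]
  have hsub : σ.support ⊆ {a, b, c} := by
    intro x hx
    rw [Finsupp.mem_support_iff] at hx
    by_contra hmem
    simp only [Finset.mem_insert, Finset.mem_singleton, not_or] at hmem
    apply hx
    simp [hσ, Finsupp.single_apply, Ne.symm hmem.1, Ne.symm hmem.2.1, Ne.symm hmem.2.2]
  have hjd : ∀ j k, jointDist σ φ j k =
      1/4 * φ a k * a j + 1/4 * φ b k * b j + 1/2 * φ c k * c j := by
    intro j k
    unfold jointDist
    rw [Finset.sum_subset hsub (fun x _ hx => by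
      rw [Finsupp.notMem_support_iff] at hx; rw [hx]; ring)]
    rw [Finset.sum_insert (by simp [hab, hac]),
      Finset.sum_insert (by simp [hbc]), Finset.sum_singleton, hσa, hσb, hσc]
    ring
  have hφa : φ a = ![1, 0, 0] := by simp [hφ, hac]
  have hφb : φ b = ![1, 0, 0] := by simp [hφ, hbc]
  have hφc : φ c = ![0, 1, 0] := by simp [hφ]
  -- 2 ∉ A
  have h2 : (2 : Fin 3) ∉ A := by
    intro h2A
    have hs : ∑ j, xs 2 j = 1 := (hmkt 2 h2A).2
    have hz : ∀ j, xs 2 j = 0 := by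
      intro j
      have h := hjoint j 2
      rw [hjd, hφa, hφb, hφc] at h
      simp only [directJoint, if_pos h2A, hφa, hφb, hφc, Matrix.cons_val_zero, Matrix.cons_val_one, Matrix.cons_val_two, Matrix.head_cons, Matrix.tail_cons] at h
      norm_num at h
      rcases h with h | h
      · exact absurd h (ne_of_gt (hw 2 h2A))
      · exact h
    rw [Fin.sum_univ_three, hz 0, hz 1, hz 2] at hs
    norm_num at hs
  -- 0 ∈ A and its values
  have h0A : (0 : Fin 3) ∈ A := by
    by_contra h0A
    have h := hjoint 0 0
    rw [hjd, hφa, hφb, hφc] at h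
    simp only [directJoint, if_neg h0A, hφa, hφb, hφc, ha, hb, hc] at h
    norm_num at h
  have h00 : w 0 * xs 0 0 = 1/4 := by
    have h := hjoint 0 0
    rw [hjd, hφa, hφb, hφc] at h
    simp only [directJoint, if_pos h0A, hφa, hφb, hφc, ha, hb, hc] at h
    norm_num at h
    linarith
  have h01 : w 0 * xs 0 1 = 1/6 := by
    have h := hjoint 1 0
    rw [hjd, hφa, hφb, hφc] at h
    simp only [directJoint, if_pos h0A, hφa, hφb, hφc, ha, hb, hc] at h
    norm_num at h
    linarith
  have h02 : w 0 * xs 0 2 = 1/12 := by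
    have h := hjoint 2 0
    rw [hjd, hφa, hφb, hφc] at h
    simp only [directJoint, if_pos h0A, hφa, hφb, hφc, ha, hb, hc, Matrix.cons_val_two, Matrix.head_cons, Matrix.tail_cons] at h
    norm_num at h
    linarith
  have hw0 : w 0 = 1/2 := by
    have hs : ∑ j, xs 0 j = 1 := (hmkt 0 h0A).2
    rw [Fin.sum_univ_three] at hs
    have : w 0 * (xs 0 0 + xs 0 1 + xs 0 2) = 1/2 := by
      rw [mul_add, mul_add, h00, h01, h02]; norm_num
    rw [hs, mul_one] at this
    exact this
  -- 1 ∈ A and its values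
  have h1A : (1 : Fin 3) ∈ A := by
    by_contra h1A
    have h := hjoint 0 1
    rw [hjd, hφa, hφb, hφc] at h
    simp only [directJoint, if_neg h1A, hφa, hφb, hφc, ha, hb, hc] at h
    norm_num at h
  have h10 : w 1 * xs 1 0 = 1/4 := by
    have h := hjoint 0 1
    rw [hjd, hφa, hφb, hφc] at h
    simp only [directJoint, if_pos h1A, hφa, hφb, hφc, ha, hb, hc] at h
    norm_num at h
    linarith
  have h11 : w 1 * xs 1 1 = 1/6 := by
    have h := hjoint 1 1
    rw [hjd, hφa, hφb, hφc] at h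
    simp only [directJoint, if_pos h1A, hφa, hφb, hφc, ha, hb, hc] at h
    norm_num at h
    linarith
  have h12 : w 1 * xs 1 2 = 1/12 := by
    have h := hjoint 2 1
    rw [hjd, hφa, hφb, hφc] at h
    simp only [directJoint, if_pos h1A, hφa, hφb, hφc, ha, hb, hc, Matrix.cons_val_two, Matrix.head_cons, Matrix.tail_cons] at h
    norm_num at h
    linarith
  have hw1 : w 1 = 1/2 := by
    have hs : ∑ j, xs 1 j = 1 := (hmkt 1 h1A).2
    rw [Fin.sum_univ_three] at hs
    have : w 1 * (xs 1 0 + xs 1 1 + xs 1 2) = 1/2 := by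
      rw [mul_add, mul_add, h10, h11, h12]; norm_num
    rw [hs, mul_one] at this
    exact this
  have heq : xs 0 = xs 1 := by
    rw [hw0] at h00 h01 h02
    rw [hw1] at h10 h11 h12
    have e0 : xs 0 0 = xs 1 0 := by linarith
    have e1 : xs 0 1 = xs 1 1 := by linarith
    have e2 : xs 0 2 = xs 1 2 := by linarith
    funext j
    fin_cases j
    exacts [e0, e1, e2]
  have : (0 : Fin 3) = 1 :=
    hinj (Finset.mem_coe.mpr h0A) (Finset.mem_coe.mpr h1A) heq
  exact absurd this (by decide)
end

section
/- Let σ be a segmentation and φ an optimal pricing rule for σ. For each k ∈ {1,…,K} with m_k := ∑_{x ∈ supp σ} σ(x) φ_k(x) > 0, define x^k := (1/m_k) ∑_{x ∈ supp σ} σ(x) φ_k(x) · x. If the markets x^k (over all k with m_k > 0) are pairwise distinct, then the distribution σ' assigning mass m_k to x^k is a direct segmentation (in particular x^k ∈ X_k for each such k) which, with its direct pricing rule, induces the same joint distribution over valuations and prices as (σ, φ). -/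
open Finset

theorem stmt13 {K : ℕ} (hK : 2 ≤ K) (v : Fin K → ℝ)
    (hv0 : ∀ k, 0 < v k) (hv : StrictMono v)
    (xstar : Fin K → ℝ) (hxstar : IsMarket K xstar) (hxpos : ∀ k, 0 < xstar k)
    (σ : (Fin K → ℝ) →₀ ℝ) (φ : (Fin K → ℝ) → Fin K → ℝ)
    (hσ : IsSegmentation xstar σ) (hφ : IsPricingRule σ φ)
    (hopt : IsOptimalPricing v σ φ)
    (hdist : Set.InjOn (condMarket σ φ) {k : Fin K | 0 < mass σ φ k}) :
    IsDirectSeg v xstar (Finset.univ.filter fun k => 0 < mass σ φ k)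
        (condMarket σ φ) (mass σ φ) ∧
      ∀ j k, directJoint (Finset.univ.filter fun k => 0 < mass σ φ k)
          (condMarket σ φ) (mass σ φ) j k = jointDist σ φ j k := by
  obtain ⟨hσ0, hσ1, hσm, hσavg⟩ := hσ
  have hnn : ∀ x ∈ σ.support, ∀ k, 0 ≤ σ x * φ x k := fun x hx k =>
    mul_nonneg (hσ0 x) ((hφ x hx).1 k)
  have hmnn : ∀ k, 0 ≤ mass σ φ k := fun k =>
    Finset.sum_nonneg fun x hx => hnn x hx k
  have hzero : ∀ k, ¬ 0 < mass σ φ k → ∀ x ∈ σ.support, σ x * φ x k = 0 := by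
    intro k hk x hx
    have hm0 : mass σ φ k = 0 := le_antisymm (not_lt.mp hk) (hmnn k)
    exact (Finset.sum_eq_zero_iff_of_nonneg (fun x hx => hnn x hx k)).mp hm0 x hx
  have hcond : ∀ k j, condMarket σ φ k j
      = (mass σ φ k)⁻¹ * ∑ x ∈ σ.support, σ x * φ x k * x j := by
    intro k j
    simp [condMarket, Finset.sum_apply]
  -- joint distribution equality
  have hjoint : ∀ j k, directJoint (Finset.univ.filter fun k => 0 < mass σ φ k)
      (condMarket σ φ) (mass σ φ) j k = jointDist σ φ j k := by
    intro j k
    by_cases hk : 0 < mass σ φ k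
    · simp only [directJoint, Finset.mem_filter, Finset.mem_univ, true_and, if_pos hk,
        hcond, jointDist]
      rw [mul_inv_cancel_left₀ (ne_of_gt hk)]
    · simp only [directJoint, Finset.mem_filter, Finset.mem_univ, true_and, if_neg hk,
        jointDist]
      rw [eq_comm]
      exact Finset.sum_eq_zero fun x hx => by rw [hzero k hk x hx, zero_mul]
  refine ⟨⟨?_, ?_, ?_, ?_, ?_, ?_⟩, hjoint⟩
  · -- injectivity
    intro a ha b hb hab
    exact hdist (by simpa using ha) (by simpa using hb) hab
  · -- market
    intro k hk
    have hk' : 0 < mass σ φ k := (Finset.mem_filter.mp hk).2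
    constructor
    · intro j
      rw [hcond]
      exact mul_nonneg (inv_nonneg.mpr (hmnn k))
        (Finset.sum_nonneg fun x hx => mul_nonneg (hnn x hx k) ((hσm x hx).1 j))
    · have : ∑ j, condMarket σ φ k j
          = (mass σ φ k)⁻¹ * ∑ x ∈ σ.support, σ x * φ x k := by
        simp only [hcond, ← Finset.mul_sum]
        congr 1
        rw [Finset.sum_comm]
        exact Finset.sum_congr rfl fun x hx => by
          rw [← Finset.mul_sum, (hσm x hx).2, mul_one]
      rw [this]
      exact inv_mul_cancel₀ (ne_of_gt hk')
  · -- optimal price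
    intro k hk i
    have hk' : 0 < mass σ φ k := (Finset.mem_filter.mp hk).2
    have hrev : ∀ i', rev v (condMarket σ φ k) i'
        = (mass σ φ k)⁻¹ * ∑ x ∈ σ.support, σ x * φ x k * rev v x i' := by
      intro i'
      simp only [rev, hcond, ← Finset.mul_sum, Finset.mul_sum]
      rw [Finset.sum_comm]
      ring_nf
    rw [hrev, hrev]
    apply mul_le_mul_of_nonneg_left _ (inv_nonneg.mpr (hmnn k))
    apply Finset.sum_le_sum
    intro x hx
    rcases eq_or_lt_of_le (hnn x hx k) with h | h
    · rw [← h, zero_mul, zero_mul]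
    · have hφpos : 0 < φ x k := by
        by_contra hc
        push_neg at hc
        have h0 : φ x k = 0 := le_antisymm hc ((hφ x hx).1 k)
        rw [h0, mul_zero] at h
        exact lt_irrefl 0 h
      exact mul_le_mul_of_nonneg_left (hopt x hx k hφpos i) (le_of_lt h)
  · intro k hk
    exact (Finset.mem_filter.mp hk).2
  · -- weights sum to 1
    have h1 : ∑ k ∈ Finset.univ.filter (fun k => 0 < mass σ φ k), mass σ φ k
        = ∑ k, mass σ φ k := by
      apply Finset.sum_filter_of_ne
      intro k _ hne
      rcases (hmnn k).lt_or_eq with h | h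
      · exact h
      · exact absurd h.symm hne
    rw [h1]
    simp only [mass]
    rw [Finset.sum_comm]
    rw [← hσ1]
    exact Finset.sum_congr rfl fun x hx => by rw [← Finset.mul_sum, (hφ x hx).2, mul_one]
  · -- average
    have h1 : ∑ k ∈ Finset.univ.filter (fun k => 0 < mass σ φ k),
        mass σ φ k • condMarket σ φ k
        = ∑ k : Fin K, ∑ x ∈ σ.support, (σ x * φ x k) • x := by
      rw [Finset.sum_filter_of_ne]
      · apply Finset.sum_congr rfl
        intro k hk
        by_cases h : 0 < mass σ φ k
        · rw [condMarket, smul_smul, mul_inv_cancel₀ (ne_of_gt h), one_smul]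
        · rw [(le_antisymm (not_lt.mp h) (hmnn k) : mass σ φ k = 0), zero_smul, eq_comm]
          exact Finset.sum_eq_zero fun x hx => by rw [hzero k h x hx, zero_smul]
      · intro k _ hne
        by_contra h
        apply hne
        rw [le_antisymm (not_lt.mp h) (hmnn k), zero_smul]
    rw [h1, Finset.sum_comm, ← hσavg]
    apply Finset.sum_congr rfl
    intro x hx
    rw [← Finset.sum_smul, ← Finset.mul_sum, (hφ x hx).2, mul_one]
end
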